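/- Suppose L is a free A-module with a finite basis (Z_α)_{α∈ι}, let ρ : L →ₗ[A] L be A-linear with ρ ∘ ρ = id, and let ∇ be the Weitzenböck operator ∇_X Y := ∑_α (ρ(X) Y^α) • Z_α, where Y = ∑_α Y^α • Z_α. Then ∇ is flat: for all X, Y, Z ∈ L, ∇_X(∇_Y Z) − ∇_Y(∇_X Z) − ∇_{ρ(⁅ρ(X), ρ(Y)⁆)} Z = 0. -/

import Mathlib

open scoped BigOperators

/-- A (parity-sign-free) quasi-connection on the module `L = Derivation ℝ A A` of
vector fields: an `A`-linear anchor `ρ` together with an `ℝ`-bilinear map `∇`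
satisfying `∇_{f•X} Y = f • ∇_X Y` and `∇_X (f•Y) = (ρ(X) f) • Y + f • ∇_X Y`. -/
def IsQuasiConnection {A : Type*} [CommRing A] [Algebra ℝ A]
    (nabla : Derivation ℝ A A → Derivation ℝ A A → Derivation ℝ A A)
    (rho : Derivation ℝ A A →ₗ[A] Derivation ℝ A A) : Prop :=
  (∀ X X' Y, nabla (X + X') Y = nabla X Y + nabla X' Y) ∧
  (∀ (c : ℝ) (X Y), nabla (c • X) Y = c • nabla X Y) ∧
  (∀ X Y Y', nabla X (Y + Y') = nabla X Y + nabla X Y') ∧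
  (∀ (c : ℝ) (X Y), nabla X (c • Y) = c • nabla X Y) ∧
  (∀ (f : A) (X Y), nabla (f • X) Y = f • nabla X Y) ∧
  (∀ (f : A) (X Y), nabla X (f • Y) = rho X f • Y + f • nabla X Y)

/-- The torsion `T(X,Y) := ∇_X Y − ∇_Y X − ρ(⁅ρ(X), ρ(Y)⁆)` of a quasi-connection. -/
def qcTorsion {A : Type*} [CommRing A] [Algebra ℝ A]
    (nabla : Derivation ℝ A A → Derivation ℝ A A → Derivation ℝ A A)
    (rho : Derivation ℝ A A →ₗ[A] Derivation ℝ A A)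
    (X Y : Derivation ℝ A A) : Derivation ℝ A A :=
  nabla X Y - nabla Y X - rho ⁅rho X, rho Y⁆

/-- The curvature `R(X,Y)Z := ∇_X(∇_Y Z) − ∇_Y(∇_X Z) − ∇_{ρ(⁅ρ(X), ρ(Y)⁆)} Z`. -/
def qcCurvature {A : Type*} [CommRing A] [Algebra ℝ A]
    (nabla : Derivation ℝ A A → Derivation ℝ A A → Derivation ℝ A A)
    (rho : Derivation ℝ A A →ₗ[A] Derivation ℝ A A)
    (X Y Z : Derivation ℝ A A) : Derivation ℝ A A :=
  nabla X (nabla Y Z) - nabla Y (nabla X Z) - nabla (rho ⁅rho X, rho Y⁆) Z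

/-- An affine connection on `L = Derivation ℝ A A`. -/
def IsAffineConnection {A : Type*} [CommRing A] [Algebra ℝ A]
    (nabla : Derivation ℝ A A → Derivation ℝ A A → Derivation ℝ A A) : Prop :=
  (∀ X X' Y, nabla (X + X') Y = nabla X Y + nabla X' Y) ∧
  (∀ (c : ℝ) (X Y), nabla (c • X) Y = c • nabla X Y) ∧
  (∀ X Y Y', nabla X (Y + Y') = nabla X Y + nabla X Y') ∧
  (∀ (c : ℝ) (X Y), nabla X (c • Y) = c • nabla X Y) ∧
  (∀ (f : A) (X Y), nabla (f • X) Y = f • nabla X Y) ∧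
  (∀ (f : A) (X Y), nabla X (f • Y) = X f • Y + f • nabla X Y)

/-- Propositions 2.41 and 2.37 (sign-free form): the Weitzenböck operator associated
to a parallelisation and an involutive anchor is flat. -/
theorem weitzenboeck_flat {A : Type*} [CommRing A] [Algebra ℝ A]
    {ι : Type*} [Fintype ι]
    (b : Module.Basis ι A (Derivation ℝ A A))
    (rho : Derivation ℝ A A →ₗ[A] Derivation ℝ A A)
    (hinv : rho ∘ₗ rho = LinearMap.id) :
    ∀ X Y Z : Derivation ℝ A A,
      qcCurvature (fun X Y => ∑ α, rho X (b.repr Y α) • b α) rho X Y Z = 0 := by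
  intro X Y Z
  have hrr : ∀ (W : Derivation ℝ A A), rho (rho W) = W := fun W =>
    congrFun (congrArg DFunLike.coe hinv) W
  set nabla : Derivation ℝ A A → Derivation ℝ A A → Derivation ℝ A A :=
    fun X Y => ∑ α, rho X (b.repr Y α) • b α with hn
  have hrepr : ∀ (W V : Derivation ℝ A A) (β : ι),
      b.repr (nabla W V) β = rho W (b.repr V β) := by
    intro W V β
    classical
    simp [hn, Finsupp.single_apply]
  show nabla X (nabla Y Z) - nabla Y (nabla X Z) - nabla (rho ⁅rho X, rho Y⁆) Z = 0
  have h1 : nabla X (nabla Y Z) = ∑ α, rho X (rho Y (b.repr Z α)) • b α := by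
    exact Finset.sum_congr rfl fun α _ => by rw [hrepr]
  have h2 : nabla Y (nabla X Z) = ∑ α, rho Y (rho X (b.repr Z α)) • b α := by
    exact Finset.sum_congr rfl fun α _ => by rw [hrepr]
  have h3 : nabla (rho ⁅rho X, rho Y⁆) Z
      = ∑ α, (rho X (rho Y (b.repr Z α)) - rho Y (rho X (b.repr Z α))) • b α := by
    rw [hn]
    simp only [hrr, Derivation.commutator_apply]
  rw [h1, h2, h3]
  rw [← Finset.sum_sub_distrib, ← Finset.sum_sub_distrib]
  apply Finset.sum_eq_zero
  intro α _
  rw [← sub_smul, ← sub_smul]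
  simp
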